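/- arXiv:2003.04731 — 2 statements merged into one kernel-verified Lean document; each statement's English description precedes it below -/
import Mathlib

section
/- Let s₁,s₂>0 and let λ∈Γ⁺_{]s₁,s₂[}. Then Σᵢ ∂F_τ/∂λᵢ lies in [√(a²+1)/((s₁+a)²−b²), n√(a²+1)/(a²−b²)] if 0<τ<π/4, in [√2/(1+s₁)², n√2] if τ=π/4, in [√(a²+1)/((s₁+a)²+b²), n√(a²+1)/(a²+b²)] if π/4<τ<π/2, and in [1/(1+s₁²), n] if τ=π/2. Moreover Σᵢ (∂F_τ/∂λᵢ)·λᵢ² lies in [s₂²√(a²+1)/((s₂+a)²−b²), n√(a²+1)] if 0<τ<π/4, in [s₂²√2/(1+s₂)², n√2] if τ=π/4, in [s₂²√(a²+1)/((s₂+a)²+b²), n√(a²+1)] if π/4<τ<π/2, and in [s₂²/(1+s₂²), n] if τ=π/2. -/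
noncomputable section

open Real Set Filter Topology Matrix
open scoped Classical

namespace SBV

abbrev En (n : ℕ) := EuclideanSpace ℝ (Fin n)

/-- `i`-th partial derivative of `u` at `x`. -/
def pd {n : ℕ} (u : En n → ℝ) (i : Fin n) (x : En n) : ℝ :=
  fderiv ℝ u x (EuclideanSpace.single i 1)

/-- Gradient `Du` of `u` at `x`, as a point of Euclidean space. -/
def grad {n : ℕ} (u : En n → ℝ) (x : En n) : En n :=
  (WithLp.equiv 2 (Fin n → ℝ)).symm fun i => pd u i x

/-- Hessian matrix `D²u` of `u` at `x`. -/
def Hess {n : ℕ} (u : En n → ℝ) (x : En n) : Matrix (Fin n) (Fin n) ℝ :=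
  Matrix.of fun i j => pd (fun y => pd u j y) i x

/-- `lam` is a vector of eigenvalues of the symmetric matrix `A`. -/
def IsEigs {n : ℕ} (A : Matrix (Fin n) (Fin n) ℝ) (lam : Fin n → ℝ) : Prop :=
  ∃ P : Matrix (Fin n) (Fin n) ℝ, Pᵀ * P = 1 ∧ A = P * Matrix.diagonal lam * Pᵀ

/-- The positive cone `Γ⁺_n`. -/
def PosCone (n : ℕ) : Set (Fin n → ℝ) := {lam | ∀ i, 0 < lam i}

/-- `i`-th partial derivative of a function of `n` real variables. -/
def pdF {n : ℕ} (F : (Fin n → ℝ) → ℝ) (i : Fin n) (lam : Fin n → ℝ) : ℝ :=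
  fderiv ℝ F lam (Pi.single i 1)

/-- Second partial derivatives of a function of `n` real variables. -/
def pdF2 {n : ℕ} (F : (Fin n → ℝ) → ℝ) (i j : Fin n) (lam : Fin n → ℝ) : ℝ :=
  fderiv ℝ (pdF F j) lam (Pi.single i 1)

/-- `h` is a defining function of the uniformly convex domain `Ω` with convexity constant `θ`. -/
def IsDefiningFn {n : ℕ} (Ω : Set (En n)) (h : En n → ℝ) (θ : ℝ) : Prop :=
  ContDiff ℝ (⊤ : ℕ∞) h ∧ Ω = {p | 0 < h p} ∧
  (∀ p ∈ frontier Ω, ‖grad h p‖ = 1) ∧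
  (∀ p ∈ closure Ω, ∀ ξ : Fin n → ℝ,
    ∑ i, ∑ j, Hess h p i j * ξ i * ξ j ≤ -θ * ∑ i, ξ i ^ 2)

/-- Uniformly convex bounded domain with smooth boundary. -/
def UCDomain {n : ℕ} (Ω : Set (En n)) : Prop :=
  Ω.Nonempty ∧ IsOpen Ω ∧ Bornology.IsBounded Ω ∧ Convex ℝ Ω ∧
    ∃ h θ, 0 < θ ∧ IsDefiningFn Ω h θ

/-- The operator `F_τ` of the Lagrangian mean curvature equation. -/
def Ftau {n : ℕ} (τ : ℝ) (lam : Fin n → ℝ) : ℝ :=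
  if τ < π / 4 then
    Real.sqrt (Real.cot τ ^ 2 + 1) / (2 * Real.sqrt |Real.cot τ ^ 2 - 1|) *
      ∑ i, Real.log ((lam i + Real.cot τ - Real.sqrt |Real.cot τ ^ 2 - 1|) /
        (lam i + Real.cot τ + Real.sqrt |Real.cot τ ^ 2 - 1|))
  else if τ = π / 4 then -Real.sqrt 2 * ∑ i, (1 + lam i)⁻¹
  else if τ < π / 2 then
    Real.sqrt (Real.cot τ ^ 2 + 1) / Real.sqrt |Real.cot τ ^ 2 - 1| *
      ∑ i, Real.arctan ((lam i + Real.cot τ - Real.sqrt |Real.cot τ ^ 2 - 1|) /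
        (lam i + Real.cot τ + Real.sqrt |Real.cot τ ^ 2 - 1|))
  else ∑ i, Real.arctan (lam i)

/-- First derivative `∂F_τ/∂λᵢ` as a function of the single entry `l = λᵢ`. -/
def dFtau (τ l : ℝ) : ℝ :=
  if τ < π / 4 then
    Real.sqrt (Real.cot τ ^ 2 + 1) /
      ((l + Real.cot τ) ^ 2 - Real.sqrt |Real.cot τ ^ 2 - 1| ^ 2)
  else if τ = π / 4 then Real.sqrt 2 / (1 + l) ^ 2
  else if τ < π / 2 then
    Real.sqrt (Real.cot τ ^ 2 + 1) /
      ((l + Real.cot τ) ^ 2 + Real.sqrt |Real.cot τ ^ 2 - 1| ^ 2)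
  else 1 / (1 + l ^ 2)

/-- Diagonal second derivative `∂²F_τ/∂λᵢ²` as a function of `l = λᵢ`. -/
def d2Ftau (τ l : ℝ) : ℝ :=
  if τ < π / 4 then
    -2 * Real.sqrt (Real.cot τ ^ 2 + 1) * (l + Real.cot τ) /
      ((l + Real.cot τ) ^ 2 - Real.sqrt |Real.cot τ ^ 2 - 1| ^ 2) ^ 2
  else if τ = π / 4 then -2 * Real.sqrt 2 / (1 + l) ^ 3
  else if τ < π / 2 then
    -2 * Real.sqrt (Real.cot τ ^ 2 + 1) * (l + Real.cot τ) /
      ((l + Real.cot τ) ^ 2 + Real.sqrt |Real.cot τ ^ 2 - 1| ^ 2) ^ 2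
  else -2 * l / (1 + l ^ 2) ^ 2

/-- The value `F_τ(0,…,0)`. -/
def FtauZero (n : ℕ) (τ : ℝ) : ℝ :=
  if τ < π / 4 then
    n * Real.sqrt (Real.cot τ ^ 2 + 1) / (2 * Real.sqrt |Real.cot τ ^ 2 - 1|) *
      Real.log ((Real.cot τ - Real.sqrt |Real.cot τ ^ 2 - 1|) /
        (Real.cot τ + Real.sqrt |Real.cot τ ^ 2 - 1|))
  else if τ = π / 4 then -Real.sqrt 2 * n
  else if τ < π / 2 then
    n * Real.sqrt (Real.cot τ ^ 2 + 1) / Real.sqrt |Real.cot τ ^ 2 - 1| *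
      Real.arctan ((Real.cot τ - Real.sqrt |Real.cot τ ^ 2 - 1|) /
        (Real.cot τ + Real.sqrt |Real.cot τ ^ 2 - 1|))
  else 0

/-- The value `F_τ(+∞,…,+∞)`. -/
def FtauTop (n : ℕ) (τ : ℝ) : ℝ :=
  if τ ≤ π / 4 then 0
  else if τ < π / 2 then
    n * π * Real.sqrt (Real.cot τ ^ 2 + 1) / (4 * Real.sqrt |Real.cot τ ^ 2 - 1|)
  else n * π / 2

/-- The dual operator `F̃_τ(μ) = -F_τ(1/μ)`. -/
def Ftaud {n : ℕ} (τ : ℝ) (mu : Fin n → ℝ) : ℝ := -Ftau τ fun i => (mu i)⁻¹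

/-- Diagonal second derivative `∂²F̃_τ/∂μᵢ²` as a function of `m = μᵢ`. -/
def d2Ftaud (τ m : ℝ) : ℝ :=
  if τ < π / 4 then
    -2 * Real.sqrt (Real.cot τ ^ 2 + 1) * (m + Real.cot τ) /
      ((1 + Real.cot τ * m) ^ 2 - (Real.sqrt |Real.cot τ ^ 2 - 1| * m) ^ 2) ^ 2
  else if τ = π / 4 then -2 * Real.sqrt 2 / (1 + m) ^ 3
  else if τ < π / 2 then
    -2 * Real.sqrt (Real.cot τ ^ 2 + 1) * (m + Real.cot τ) /
      ((1 + Real.cot τ * m) ^ 2 + (Real.sqrt |Real.cot τ ^ 2 - 1| * m) ^ 2) ^ 2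
  else -2 * m / (1 + m ^ 2) ^ 2

/-- `u` solves the flow `∂u/∂t = F(λ(D²u)) - f` with second boundary condition
`Du(Ω) = Ω̃` and initial value `u₀`, for times in `I`. -/
def SolvesFlow {n : ℕ} (F : (Fin n → ℝ) → ℝ) (f : En n → ℝ) (Ω Ωt : Set (En n))
    (u₀ : En n → ℝ) (u : ℝ → En n → ℝ) (I : Set ℝ) : Prop :=
  (∀ t ∈ I, ∀ x ∈ Ω, ∃ lam ∈ PosCone n,
      IsEigs (Hess (u t) x) lam ∧ HasDerivAt (fun s => u s x) (F lam - f x) t) ∧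
  (∀ t ∈ I, grad (u t) '' Ω = Ωt) ∧
  ∀ x ∈ closure Ω, u 0 x = u₀ x

/-- `u` solves the flow with the boundary condition expressed through the defining
function `h` of the target domain: `h(Du) = 0` on `∂Ω`. -/
def SolvesFlowBC {n : ℕ} (F : (Fin n → ℝ) → ℝ) (f h : En n → ℝ) (Ω : Set (En n))
    (u₀ : En n → ℝ) (u : ℝ → En n → ℝ) (T : ℝ) : Prop :=
  (∀ t ∈ Ioc 0 T, ∀ x ∈ Ω, ∃ lam ∈ PosCone n,
      IsEigs (Hess (u t) x) lam ∧ HasDerivAt (fun s => u s x) (F lam - f x) t) ∧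
  (∀ t ∈ Ioc 0 T, ∀ x ∈ frontier Ω, h (grad (u t) x) = 0) ∧
  ∀ x ∈ closure Ω, u 0 x = u₀ x

/-- `ut` solves the dual (Legendre-transformed) flow
`∂ũ/∂t = F̃(λ(D²ũ)) + f(Dũ)` on `Ω̃`, with `h̃(Dũ) = 0` on `∂Ω̃`. -/
def SolvesDualFlow {n : ℕ} (Ft : (Fin n → ℝ) → ℝ) (f ht : En n → ℝ) (Ωt : Set (En n))
    (ut₀ : En n → ℝ) (ut : ℝ → En n → ℝ) (T : ℝ) : Prop :=
  (∀ t ∈ Ioc 0 T, ∀ y ∈ Ωt, ∃ mu ∈ PosCone n,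
      IsEigs (Hess (ut t) y) mu ∧
      HasDerivAt (fun s => ut s y) (Ft mu + f (grad (ut t) y)) t) ∧
  (∀ t ∈ Ioc 0 T, ∀ y ∈ frontier Ωt, ht (grad (ut t) y) = 0) ∧
  ∀ y ∈ closure Ωt, ut 0 y = ut₀ y

/-- The solution is strictly convex in the space variable for times in `I`. -/
def StrictlyConvexSol {n : ℕ} (Ω : Set (En n)) (u : ℝ → En n → ℝ) (I : Set ℝ) : Prop :=
  ∀ t ∈ I, ∀ x ∈ Ω, (Hess (u t) x).PosDef

/-- Structure conditions (i)-(v) of the paper for the operator `F`, with limit values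
`F0 = F(0,…,0)` and `Finf = F(+∞,…,+∞)`. -/
def StructCond {n : ℕ} (F : (Fin n → ℝ) → ℝ) (F0 Finf : ℝ) : Prop :=
  (∀ lam ∈ PosCone n, ∀ σ : Equiv.Perm (Fin n), F (lam ∘ σ) = F lam) ∧
  ContDiffOn ℝ 2 F (PosCone n) ∧
  Tendsto (fun l : ℝ => F fun _ => l) (𝓝[>] 0) (𝓝 F0) ∧
  Tendsto (fun l : ℝ => F fun _ => l) atTop (𝓝 Finf) ∧
  F0 < Finf ∧
  (∀ lam ∈ PosCone n, ∀ i, 0 < pdF F i lam) ∧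
  (∀ lam ∈ PosCone n, ∀ ξ : Fin n → ℝ,
      ∑ i, ∑ j, pdF2 F i j lam * ξ i * ξ j ≤ 0) ∧
  (∀ mu ∈ PosCone n, ∀ ξ : Fin n → ℝ,
      ∑ i, ∑ j, pdF2 (fun m => -F fun k => (m k)⁻¹) i j mu * ξ i * ξ j ≤ 0) ∧
  (∀ s₁ s₂ : ℝ, 0 < s₁ → 0 < s₂ → ∃ L₁ L₂ : ℝ, 0 < L₁ ∧ 0 < L₂ ∧
      ∀ lam ∈ PosCone n, (∃ i, lam i ≤ s₁) → (∃ i, s₂ ≤ lam i) →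
        L₁ ≤ ∑ i, pdF F i lam ∧ (∑ i, pdF F i lam) ≤ L₂ ∧
        L₁ ≤ ∑ i, pdF F i lam * lam i ^ 2 ∧ (∑ i, pdF F i lam * lam i ^ 2) ≤ L₂)

/-- Membership in the class `𝒜_δ`: concave, `C²`, and oscillation at most `δ`. -/
def InA {n : ℕ} (Ω : Set (En n)) (δ : ℝ) (f : En n → ℝ) : Prop :=
  ContDiffOn ℝ 2 f (closure Ω) ∧ ConcaveOn ℝ (closure Ω) f ∧
  ∀ x ∈ closure Ω, ∀ y ∈ closure Ω, |f x - f y| ≤ δ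

/-- Admissibility of `δ` relative to the initial datum:
`δ < min{Finf - max F(λ(D²u₀)), min F(λ(D²u₀)) - F0}`. -/
def DeltaAdm {n : ℕ} (Ω : Set (En n)) (F : (Fin n → ℝ) → ℝ) (F0 Finf : ℝ)
    (u₀ : En n → ℝ) (δ : ℝ) : Prop :=
  0 < δ ∧ ∃ g₀ : En n → ℝ,
    (∀ x ∈ closure Ω, ∃ lam ∈ PosCone n, IsEigs (Hess u₀ x) lam ∧ g₀ x = F lam) ∧
    δ < Finf - sSup (g₀ '' closure Ω) ∧ δ < sInf (g₀ '' closure Ω) - F0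

/-- The initial datum is uniformly convex with `Du₀(Ω) = Ω̃`. -/
def GoodInit {n : ℕ} (Ω Ωt : Set (En n)) (u₀ : En n → ℝ) : Prop :=
  ContDiffOn ℝ 2 u₀ (closure Ω) ∧ (∀ x ∈ closure Ω, (Hess u₀ x).PosDef) ∧
  grad u₀ '' Ω = Ωt

/-- Two-sided bounds `Λ₁ ≤ Σᵢ ∂F/∂λᵢ ≤ Λ₂` and `Λ₁ ≤ Σᵢ (∂F/∂λᵢ)λᵢ² ≤ Λ₂`
along the flow. -/
def FlowBounds {n : ℕ} (F : (Fin n → ℝ) → ℝ) (Ω : Set (En n)) (u : ℝ → En n → ℝ)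
    (T Λ₁ Λ₂ : ℝ) : Prop :=
  ∀ t ∈ Ioc 0 T, ∀ x ∈ Ω, ∀ lam ∈ PosCone n, IsEigs (Hess (u t) x) lam →
    Λ₁ ≤ ∑ i, pdF F i lam ∧ (∑ i, pdF F i lam) ≤ Λ₂ ∧
    Λ₁ ≤ ∑ i, pdF F i lam * lam i ^ 2 ∧ (∑ i, pdF F i lam * lam i ^ 2) ≤ Λ₂

/-- Supremum of a real-valued function on a set. -/
def supO {α : Type*} (s : Set α) (g : α → ℝ) : ℝ := sSup (g '' s)

/-- Hölder seminorm `[v]_γ` on a set `s`. -/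
def hSemi {E F : Type*} [NormedAddCommGroup E] [NormedAddCommGroup F]
    (γ : ℝ) (s : Set E) (v : E → F) : ℝ :=
  sSup {C | ∃ x ∈ s, ∃ y ∈ s, x ≠ y ∧ C = ‖v x - v y‖ / ‖x - y‖ ^ γ}

/-- The `C^{k+γ}` norm on a set `s`. -/
def cNormK {n : ℕ} (k : ℕ) (γ : ℝ) (s : Set (En n)) (w : En n → ℝ) : ℝ :=
  (∑ j ∈ Finset.range (k + 1), supO s fun x => ‖iteratedFDeriv ℝ j w x‖) +
    hSemi γ s (iteratedFDeriv ℝ k w)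

/-- Parabolic Hölder seminorm `[v]_{γ,γ/2}` on a space-time set `Q`. -/
def pSemi {n : ℕ} {F : Type*} [NormedAddCommGroup F] (γ : ℝ) (Q : Set (En n × ℝ))
    (v : En n × ℝ → F) : ℝ :=
  sSup {C | ∃ p ∈ Q, ∃ q ∈ Q, p ≠ q ∧
    C = ‖v p - v q‖ / (‖p.1 - q.1‖ ^ γ + |p.2 - q.2| ^ (γ / 2))}

/-- Parabolic Hölder norm `‖v‖_{C^{γ,γ/2}(Q)}`. -/
def pNormC {n : ℕ} {F : Type*} [NormedAddCommGroup F] (γ : ℝ) (Q : Set (En n × ℝ))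
    (v : En n × ℝ → F) : ℝ :=
  supO Q (fun p => ‖v p‖) + pSemi γ Q v

/-- Membership in the parabolic class `C^{2+γ,(2+γ)/2}(Q)`. -/
def InParaC2 {n : ℕ} (γ : ℝ) (Q : Set (En n × ℝ)) (u : ℝ → En n → ℝ) : Prop :=
  ContinuousOn (fun p : En n × ℝ => u p.2 p.1) Q ∧
  ∃ K : ℝ,
    (∀ p ∈ Q, ∀ q ∈ Q,
      ‖iteratedFDeriv ℝ 2 (u p.2) p.1 - iteratedFDeriv ℝ 2 (u q.2) q.1‖ ≤
        K * (‖p.1 - q.1‖ ^ γ + |p.2 - q.2| ^ (γ / 2))) ∧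
    (∀ p ∈ Q, ∀ q ∈ Q,
      |deriv (fun s => u s p.1) p.2 - deriv (fun s => u s q.1) q.2| ≤
        K * (‖p.1 - q.1‖ ^ γ + |p.2 - q.2| ^ (γ / 2)))


section Aux

lemma cot_eq_inv_tan_aux {τ : ℝ} (h1 : 0 < τ) (h2 : τ < π / 2) :
    Real.cot τ = (Real.tan τ)⁻¹ := by
  rw [Real.cot_eq_cos_div_sin, Real.tan_eq_sin_div_cos]
  have hπ := Real.pi_pos
  have hs : 0 < Real.sin τ := Real.sin_pos_of_pos_of_lt_pi h1 (by linarith)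
  have hc : 0 < Real.cos τ := Real.cos_pos_of_mem_Ioo ⟨by linarith, h2⟩
  field_simp

lemma cot_nonneg_aux {τ : ℝ} (hτ : τ ∈ Ioc 0 (π / 2)) : 0 ≤ Real.cot τ := by
  rcases eq_or_lt_of_le hτ.2 with h | h
  · simp [h, Real.cot_eq_cos_div_sin]
  · have ht := Real.tan_pos_of_pos_of_lt_pi_div_two hτ.1 h
    rw [cot_eq_inv_tan_aux hτ.1 h]
    positivity

lemma cot_gt_one_aux {τ : ℝ} (h1 : 0 < τ) (h2 : τ < π / 4) : 1 < Real.cot τ := by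
  have hπ := Real.pi_pos
  have ht0 : 0 < Real.tan τ := Real.tan_pos_of_pos_of_lt_pi_div_two h1 (by linarith)
  have ht1 : Real.tan τ < 1 := by
    have := Real.tan_lt_tan_of_lt_of_lt_pi_div_two (x := τ) (y := π / 4)
      (by linarith) (by linarith) h2
    rwa [Real.tan_pi_div_four] at this
  rw [cot_eq_inv_tan_aux h1 (by linarith), ← one_div, lt_div_iff₀ ht0]
  linarith

lemma cot_lt_one_aux {τ : ℝ} (h1 : π / 4 < τ) (h2 : τ < π / 2) : Real.cot τ < 1 := by
  have hπ := Real.pi_pos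
  have ht0 : 0 < Real.tan τ := Real.tan_pos_of_pos_of_lt_pi_div_two (by linarith) h2
  have ht1 : 1 < Real.tan τ := by
    have := Real.tan_lt_tan_of_lt_of_lt_pi_div_two (x := π / 4) (y := τ)
      (by linarith) h2 h1
    rwa [Real.tan_pi_div_four] at this
  rw [cot_eq_inv_tan_aux (by linarith) h2, ← one_div, div_lt_one ht0]
  linarith

lemma cot_pi_div_four_aux : Real.cot (π / 4) = 1 := by
  have hπ := Real.pi_pos
  rw [cot_eq_inv_tan_aux (by linarith) (by linarith), Real.tan_pi_div_four]
  norm_num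

/-- Unified formula for `dFtau`. -/
lemma dFtau_eq {τ : ℝ} (hτ : τ ∈ Ioc 0 (π / 2)) (l : ℝ) :
    dFtau τ l =
      Real.sqrt (Real.cot τ ^ 2 + 1) / (l ^ 2 + 2 * Real.cot τ * l + 1) := by
  have hπ := Real.pi_pos
  rcases lt_trichotomy τ (π / 4) with h | h | h
  · have ha : 1 < Real.cot τ := cot_gt_one_aux hτ.1 h
    have hb2 : Real.sqrt |Real.cot τ ^ 2 - 1| ^ 2 = Real.cot τ ^ 2 - 1 := by
      rw [Real.sq_sqrt (abs_nonneg _), abs_of_nonneg (by nlinarith)]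
    rw [dFtau, if_pos h, hb2]
    ring_nf
  · rw [dFtau, if_neg (by rw [h]; exact lt_irrefl _), if_pos h, h,
      cot_pi_div_four_aux]
    norm_num
    ring_nf
  · rcases eq_or_lt_of_le hτ.2 with h2 | h2
    · rw [dFtau, if_neg (by rw [h2]; linarith), if_neg (by rw [h2]; intro hc; linarith),
        if_neg (by rw [h2]; exact lt_irrefl _), h2]
      have : Real.cot (π / 2) = 0 := by simp [Real.cot_eq_cos_div_sin]
      rw [this]
      simp [Real.sqrt_one]
      ring_nf
    · have ha0 : 0 ≤ Real.cot τ := cot_nonneg_aux hτ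
      have ha1 : Real.cot τ < 1 := cot_lt_one_aux h h2
      have hb2 : Real.sqrt |Real.cot τ ^ 2 - 1| ^ 2 = 1 - Real.cot τ ^ 2 := by
        rw [Real.sq_sqrt (abs_nonneg _), abs_of_nonpos (by nlinarith)]
        ring
      rw [dFtau, if_neg (by linarith), if_neg (by intro hc; rw [hc] at h; linarith),
        if_pos h2, hb2]
      ring_nf

lemma dFtau_denom_pos {a l : ℝ} (ha : 0 ≤ a) (hl : 0 ≤ l) :
    0 < l ^ 2 + 2 * a * l + 1 := by nlinarith

lemma dFtau_pos {τ : ℝ} (hτ : τ ∈ Ioc 0 (π / 2)) {l : ℝ} (hl : 0 ≤ l) :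
    0 < dFtau τ l := by
  rw [dFtau_eq hτ]
  have ha := cot_nonneg_aux hτ
  have hK : 0 < Real.sqrt (Real.cot τ ^ 2 + 1) := Real.sqrt_pos.mpr (by positivity)
  exact div_pos hK (dFtau_denom_pos ha hl)

lemma dFtau_anti {τ : ℝ} (hτ : τ ∈ Ioc 0 (π / 2)) {l₁ l₂ : ℝ} (h0 : 0 ≤ l₁)
    (h : l₁ ≤ l₂) : dFtau τ l₂ ≤ dFtau τ l₁ := by
  rw [dFtau_eq hτ, dFtau_eq hτ]
  have ha := cot_nonneg_aux hτ
  have hK : (0:ℝ) ≤ Real.sqrt (Real.cot τ ^ 2 + 1) := Real.sqrt_nonneg _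
  have h1 : 0 < l₁ ^ 2 + 2 * Real.cot τ * l₁ + 1 := dFtau_denom_pos ha h0
  have h2 : 0 < l₂ ^ 2 + 2 * Real.cot τ * l₂ + 1 := dFtau_denom_pos ha (h0.trans h)
  rw [div_le_div_iff₀ h2 h1]
  have t1 : 0 ≤ Real.cot τ * (l₂ - l₁) := mul_nonneg ha (sub_nonneg.2 h)
  nlinarith [mul_nonneg hK t1, mul_nonneg hK (mul_nonneg (sub_nonneg.2 h) (by linarith : (0:ℝ) ≤ l₂ + l₁))]

lemma sq_mul_dFtau_mono {τ : ℝ} (hτ : τ ∈ Ioc 0 (π / 2)) {l₁ l₂ : ℝ} (h0 : 0 ≤ l₁)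
    (h : l₁ ≤ l₂) : l₁ ^ 2 * dFtau τ l₁ ≤ l₂ ^ 2 * dFtau τ l₂ := by
  rw [dFtau_eq hτ, dFtau_eq hτ]
  have ha := cot_nonneg_aux hτ
  have hK : (0:ℝ) ≤ Real.sqrt (Real.cot τ ^ 2 + 1) := Real.sqrt_nonneg _
  have hl2 : 0 ≤ l₂ := h0.trans h
  have h1 : 0 < l₁ ^ 2 + 2 * Real.cot τ * l₁ + 1 := dFtau_denom_pos ha h0
  have h2 : 0 < l₂ ^ 2 + 2 * Real.cot τ * l₂ + 1 := dFtau_denom_pos ha hl2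
  rw [mul_div_assoc', mul_div_assoc', div_le_div_iff₀ h1 h2]
  have hd : 0 ≤ l₂ - l₁ := sub_nonneg.2 h
  have t1 : 0 ≤ Real.sqrt (Real.cot τ ^ 2 + 1) *
      (Real.cot τ * (l₁ * (l₂ * (l₂ - l₁)))) :=
    mul_nonneg hK (mul_nonneg ha (mul_nonneg h0 (mul_nonneg hl2 hd)))
  have t2 : 0 ≤ Real.sqrt (Real.cot τ ^ 2 + 1) * ((l₂ - l₁) * (l₂ + l₁)) :=
    mul_nonneg hK (mul_nonneg hd (by linarith))
  nlinarith [t1, t2]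

lemma sq_mul_dFtau_le {τ : ℝ} (hτ : τ ∈ Ioc 0 (π / 2)) {l : ℝ} (hl : 0 ≤ l) :
    l ^ 2 * dFtau τ l ≤ Real.sqrt (Real.cot τ ^ 2 + 1) := by
  rw [dFtau_eq hτ]
  have ha := cot_nonneg_aux hτ
  have hK : (0:ℝ) ≤ Real.sqrt (Real.cot τ ^ 2 + 1) := Real.sqrt_nonneg _
  have h1 : 0 < l ^ 2 + 2 * Real.cot τ * l + 1 := dFtau_denom_pos ha hl
  rw [mul_div_assoc', div_le_iff₀ h1]
  nlinarith [mul_nonneg hK (by positivity : (0:ℝ) ≤ 2 * Real.cot τ * l + 1)]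

/-- `pdF` of a coordinatewise sum. -/
lemma pdF_sum {n : ℕ} {φ d : ℝ → ℝ} (lam : Fin n → ℝ)
    (h : ∀ j, HasDerivAt φ (d (lam j)) (lam j)) (i : Fin n) :
    pdF (fun l : Fin n → ℝ => ∑ j, φ (l j)) i lam = d (lam i) := by
  have H : HasFDerivAt (fun l : Fin n → ℝ => ∑ j, φ (l j))
      (∑ j, d (lam j) • (ContinuousLinearMap.proj j : (Fin n → ℝ) →L[ℝ] ℝ)) lam := by
    refine HasFDerivAt.fun_sum fun j _ => ?_
    exact (h j).comp_hasFDerivAt lam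
      (ContinuousLinearMap.proj j : (Fin n → ℝ) →L[ℝ] ℝ).hasFDerivAt
  rw [pdF, H.fderiv]
  simp [ContinuousLinearMap.proj_apply, Pi.single_apply]

/-- Key computation: the partial derivative of `Ftau` is `dFtau`. -/
lemma pdF_Ftau {n : ℕ} {τ : ℝ} (hτ : τ ∈ Ioc 0 (π / 2)) (lam : Fin n → ℝ)
    (hlam : lam ∈ PosCone n) (i : Fin n) :
    pdF (Ftau τ) i lam = dFtau τ (lam i) := by
  have hπ := Real.pi_pos
  rcases lt_trichotomy τ (π / 4) with h | h | h
  · -- 0 < τ < π/4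
    set a := Real.cot τ with ha_def
    set b := Real.sqrt |a ^ 2 - 1| with hb_def
    have ha : 1 < a := cot_gt_one_aux hτ.1 h
    have habs : |a ^ 2 - 1| = a ^ 2 - 1 := abs_of_nonneg (by nlinarith)
    have hb2 : b ^ 2 = a ^ 2 - 1 := by rw [hb_def, Real.sq_sqrt (abs_nonneg _), habs]
    have hb : 0 < b := by
      rw [hb_def]; apply Real.sqrt_pos.mpr; rw [habs]; nlinarith
    have hble : b ≤ a := by
      rw [hb_def, habs]
      calc Real.sqrt (a ^ 2 - 1) ≤ Real.sqrt (a ^ 2) := Real.sqrt_le_sqrt (by linarith)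
        _ = a := by rw [Real.sqrt_sq (by linarith)]
    set c := Real.sqrt (a ^ 2 + 1) / (2 * b) with hc_def
    have hF : Ftau τ = fun l : Fin n → ℝ =>
        ∑ j, c * Real.log ((l j + a - b) / (l j + a + b)) := by
      funext l
      rw [Ftau, if_pos h, Finset.mul_sum]
    rw [hF, pdF_sum (φ := fun x => c * Real.log ((x + a - b) / (x + a + b)))
      (d := fun x => Real.sqrt (a ^ 2 + 1) / ((x + a) ^ 2 - b ^ 2)) lam
      (fun j => ?_), dFtau, if_pos h]
    have hlj : 0 < lam j := hlam j
    have hu : 0 < lam j + a - b := by linarith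
    have hv : 0 < lam j + a + b := by linarith
    have h1 : HasDerivAt (fun x : ℝ => x + a - b) 1 (lam j) := by
      simpa using ((hasDerivAt_id (lam j)).add_const a).sub_const b
    have h2 : HasDerivAt (fun x : ℝ => x + a + b) 1 (lam j) := by
      simpa using ((hasDerivAt_id (lam j)).add_const a).add_const b
    have hdiv := h1.div h2 hv.ne'
    have hlog := hdiv.log (div_pos hu hv).ne'
    have := hlog.const_mul c
    refine this.congr_deriv (Eq.symm ?_)
    rw [hc_def]
    simp only [Pi.div_apply]
    have hne : (lam j + a) ^ 2 - b ^ 2 ≠ 0 := by nlinarith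
    field_simp
    ring
  · -- τ = π/4
    have hF : Ftau τ = fun l : Fin n → ℝ => ∑ j, -Real.sqrt 2 * (1 + l j)⁻¹ := by
      funext l
      rw [Ftau, if_neg (by rw [h]; exact lt_irrefl _), if_pos h, Finset.mul_sum]
    rw [hF, pdF_sum (φ := fun x => -Real.sqrt 2 * (1 + x)⁻¹)
      (d := fun x => Real.sqrt 2 / (1 + x) ^ 2) lam (fun j => ?_),
      dFtau, if_neg (by rw [h]; exact lt_irrefl _), if_pos h]
    have hlj : 0 < lam j := hlam j
    have hne : (1 : ℝ) + lam j ≠ 0 := by linarith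
    have h1 : HasDerivAt (fun x : ℝ => 1 + x) 1 (lam j) := by
      simpa using (hasDerivAt_id (lam j)).const_add 1
    have := (h1.inv hne).const_mul (-Real.sqrt 2)
    refine this.congr_deriv (Eq.symm ?_)
    beta_reduce
    ring
  · rcases eq_or_lt_of_le hτ.2 with h2 | h2
    · -- τ = π/2
      have hF : Ftau τ = fun l : Fin n → ℝ => ∑ j, Real.arctan (l j) := by
        funext l
        rw [Ftau, if_neg (by rw [h2]; linarith),
          if_neg (by rw [h2]; intro hc; linarith),
          if_neg (by rw [h2]; exact lt_irrefl _)]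
      rw [hF, pdF_sum (φ := fun x => Real.arctan x) (d := fun x => 1 / (1 + x ^ 2)) lam
        (fun j => Real.hasDerivAt_arctan (lam j)),
        dFtau, if_neg (by rw [h2]; linarith),
        if_neg (by rw [h2]; intro hc; linarith),
        if_neg (by rw [h2]; exact lt_irrefl _)]
    · -- π/4 < τ < π/2
      set a := Real.cot τ with ha_def
      set b := Real.sqrt |a ^ 2 - 1| with hb_def
      have ha0 : 0 ≤ a := cot_nonneg_aux hτ
      have ha1 : a < 1 := cot_lt_one_aux h h2
      have habs : |a ^ 2 - 1| = 1 - a ^ 2 := by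
        rw [abs_of_nonpos (by nlinarith)]; ring
      have hb2 : b ^ 2 = 1 - a ^ 2 := by rw [hb_def, Real.sq_sqrt (abs_nonneg _), habs]
      have hb : 0 < b := by
        rw [hb_def]; apply Real.sqrt_pos.mpr; rw [habs]; nlinarith
      set c := Real.sqrt (a ^ 2 + 1) / b with hc_def
      have hF : Ftau τ = fun l : Fin n → ℝ =>
          ∑ j, c * Real.arctan ((l j + a - b) / (l j + a + b)) := by
        funext l
        rw [Ftau, if_neg (by linarith), if_neg (by intro hc; rw [hc] at h; linarith),
          if_pos h2, Finset.mul_sum]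
      rw [hF, pdF_sum (φ := fun x => c * Real.arctan ((x + a - b) / (x + a + b)))
        (d := fun x => Real.sqrt (a ^ 2 + 1) / ((x + a) ^ 2 + b ^ 2)) lam
        (fun j => ?_), dFtau, if_neg (by linarith),
        if_neg (by intro hc; rw [hc] at h; linarith), if_pos h2]
      have hlj : 0 < lam j := hlam j
      have hv : 0 < lam j + a + b := by linarith
      have h1 : HasDerivAt (fun x : ℝ => x + a - b) 1 (lam j) := by
        simpa using ((hasDerivAt_id (lam j)).add_const a).sub_const b
      have h2' : HasDerivAt (fun x : ℝ => x + a + b) 1 (lam j) := by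
        simpa using ((hasDerivAt_id (lam j)).add_const a).add_const b
      have hdiv := h1.div h2' hv.ne'
      have harc := hdiv.arctan
      have := harc.const_mul c
      refine this.congr_deriv (Eq.symm ?_)
      rw [hc_def]
      simp only [Pi.div_apply]
      have hden : 0 < (lam j + a) ^ 2 + b ^ 2 := by positivity
      field_simp
      ring

end Aux

/-- On `Γ⁺_{]s₁,s₂[}` the sums `Σᵢ ∂F_τ/∂λᵢ` and
`Σᵢ (∂F_τ/∂λᵢ)λᵢ²` lie in the explicit intervals of the paper
(expressed here uniformly through `dFtau`). -/
theorem stmt_4 (n : ℕ) (τ s₁ s₂ : ℝ) (hτ : τ ∈ Ioc 0 (π / 2))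
    (hs₁ : 0 < s₁) (hs₂ : 0 < s₂)
    (lam : Fin n → ℝ) (hlam : lam ∈ PosCone n)
    (hmin : ∃ i, lam i ≤ s₁) (hmax : ∃ i, s₂ ≤ lam i) :
    (dFtau τ s₁ ≤ ∑ i, pdF (Ftau τ) i lam ∧
      (∑ i, pdF (Ftau τ) i lam) ≤ n * dFtau τ 0) ∧
    (s₂ ^ 2 * dFtau τ s₂ ≤ ∑ i, pdF (Ftau τ) i lam * lam i ^ 2 ∧
      (∑ i, pdF (Ftau τ) i lam * lam i ^ 2) ≤
        n * (if τ < π / 2 then Real.sqrt (Real.cot τ ^ 2 + 1) else 1)) := by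
  have key : ∀ i, pdF (Ftau τ) i lam = dFtau τ (lam i) := pdF_Ftau hτ lam hlam
  simp only [key]
  refine ⟨⟨?_, ?_⟩, ?_, ?_⟩
  · obtain ⟨i₀, hi₀⟩ := hmin
    calc dFtau τ s₁ ≤ dFtau τ (lam i₀) := dFtau_anti hτ (hlam i₀).le hi₀
      _ ≤ ∑ i, dFtau τ (lam i) :=
        Finset.single_le_sum (fun j _ => (dFtau_pos hτ (hlam j).le).le)
          (Finset.mem_univ i₀)
  · calc ∑ i, dFtau τ (lam i) ≤ ∑ _i : Fin n, dFtau τ 0 :=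
        Finset.sum_le_sum fun j _ => dFtau_anti hτ le_rfl (hlam j).le
      _ = n * dFtau τ 0 := by simp [Finset.sum_const, nsmul_eq_mul]
  · obtain ⟨i₁, hi₁⟩ := hmax
    calc s₂ ^ 2 * dFtau τ s₂ ≤ lam i₁ ^ 2 * dFtau τ (lam i₁) :=
        sq_mul_dFtau_mono hτ hs₂.le hi₁
      _ = dFtau τ (lam i₁) * lam i₁ ^ 2 := mul_comm _ _
      _ ≤ ∑ i, dFtau τ (lam i) * lam i ^ 2 :=
        Finset.single_le_sum
          (fun j _ => mul_nonneg (dFtau_pos hτ (hlam j).le).le (sq_nonneg _))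
          (Finset.mem_univ i₁)
  · have hC : (if τ < π / 2 then Real.sqrt (Real.cot τ ^ 2 + 1) else 1) =
        Real.sqrt (Real.cot τ ^ 2 + 1) := by
      by_cases h : τ < π / 2
      · rw [if_pos h]
      · rw [if_neg h]
        have h2 : τ = π / 2 := le_antisymm hτ.2 (not_lt.mp h)
        have : Real.cot τ = 0 := by simp [h2, Real.cot_eq_cos_div_sin]
        rw [this]
        norm_num
    rw [hC]
    calc ∑ i, dFtau τ (lam i) * lam i ^ 2
        ≤ ∑ _i : Fin n, Real.sqrt (Real.cot τ ^ 2 + 1) :=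
        Finset.sum_le_sum fun j _ => by
          rw [mul_comm]; exact sq_mul_dFtau_le hτ (hlam j).le
      _ = n * Real.sqrt (Real.cot τ ^ 2 + 1) := by
        simp [Finset.sum_const, nsmul_eq_mul]

end SBV
end
end

section
/- For τ∈(0,π/2], define F̃_τ(μ₁,…,μₙ):=−F_τ(1/μ₁,…,1/μₙ) on Γ⁺_n. Then for each i, ∂F̃_τ/∂μᵢ = λᵢ²·∂F_τ/∂λᵢ where λᵢ=1/μᵢ, so ∂F̃_τ/∂μᵢ>0 on Γ⁺_n; the Hessian of F̃_τ is diagonal, with ∂²F̃_τ/∂μᵢ∂μⱼ equal to δᵢⱼ times −2√(a²+1)(μᵢ+a)/[(1+aμᵢ)²−(bμᵢ)²]² if 0<τ<π/4, −2√2/(1+μᵢ)³ if τ=π/4, −2√(a²+1)(μᵢ+a)/[(1+aμᵢ)²+(bμᵢ)²]² if π/4<τ<π/2, and −2μᵢ/(1+μᵢ²)² if τ=π/2; hence the Hessian (∂²F̃_τ/∂μᵢ∂μⱼ) is negative semidefinite on Γ⁺_n. -/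
noncomputable section

open Real Set Filter Topology Matrix
open scoped Classical

namespace SBV

lemma hasFDerivAt_sum_comp {n : ℕ} (g : ℝ → ℝ) (g' : ℝ → ℝ) (x : Fin n → ℝ)
    (hg : ∀ j, HasDerivAt g (g' (x j)) (x j)) :
    HasFDerivAt (fun y : Fin n → ℝ => ∑ j, g (y j))
      (∑ j, (g' (x j)) • (ContinuousLinearMap.proj j : (Fin n → ℝ) →L[ℝ] ℝ)) x := by
  refine HasFDerivAt.fun_sum fun j _ => ?_
  have h1 : HasFDerivAt (fun y : Fin n → ℝ => y j)
      (ContinuousLinearMap.proj j : (Fin n → ℝ) →L[ℝ] ℝ) x :=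
    hasFDerivAt_apply j x
  have h2 := (hg j).hasFDerivAt.comp x h1
  convert h2 using 1
  ext v
  simp [ContinuousLinearMap.smulRight_apply, mul_comm]
  ext v
  simp [mul_comm]

lemma pdF_of_sum {n : ℕ} (f : (Fin n → ℝ) → ℝ) (g g' : ℝ → ℝ) (x : Fin n → ℝ)
    (hfx : f =ᶠ[𝓝 x] fun y => ∑ j, g (y j))
    (hg : ∀ j, HasDerivAt g (g' (x j)) (x j)) (i : Fin n) :
    pdF f i x = g' (x i) := by
  have h := hasFDerivAt_sum_comp g g' x hg
  rw [pdF, hfx.fderiv_eq, h.fderiv]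
  simp only [ContinuousLinearMap.coe_sum', Finset.sum_apply,
    ContinuousLinearMap.smul_apply, ContinuousLinearMap.proj_apply]
  rw [Finset.sum_eq_single i]
  · simp
  · intro j _ hj; simp [Pi.single_apply, hj]
  · simp

lemma pdF_of_proj {n : ℕ} (f : (Fin n → ℝ) → ℝ) (g g' : ℝ → ℝ) (x : Fin n → ℝ) (j : Fin n)
    (hfx : f =ᶠ[𝓝 x] fun y => g (y j)) (hg : HasDerivAt g (g' (x j)) (x j)) (i : Fin n) :
    pdF f i x = if i = j then g' (x j) else 0 := by
  have h2 : HasFDerivAt (fun y : Fin n → ℝ => g (y j))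
      ((ContinuousLinearMap.toSpanSingleton ℝ (g' (x j))).comp (ContinuousLinearMap.proj j)) x :=
    hg.hasFDerivAt.comp x (hasFDerivAt_apply j x)
  rw [pdF, hfx.fderiv_eq, h2.fderiv]
  simp [Pi.single_apply, eq_comm]

lemma posCone_isOpen (n : ℕ) : IsOpen (PosCone n) := by
  have : PosCone n = ⋂ i, (fun y : Fin n → ℝ => y i) ⁻¹' Ioi 0 := by
    ext y; simp [PosCone]
  rw [this]
  exact isOpen_iInter_of_finite fun i => (continuous_apply i).isOpen_preimage _ isOpen_Ioi

lemma main_of_data {n : ℕ} (τ : ℝ) (φ φ' D : ℝ → ℝ)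
    (hFtau : ∀ y : Fin n → ℝ, y ∈ PosCone n → Ftau τ y = ∑ j, φ (y j))
    (hφ : ∀ l : ℝ, 0 < l → HasDerivAt φ (φ' l) l)
    (hφpos : ∀ l : ℝ, 0 < l → 0 < φ' l)
    (hdual : ∀ m : ℝ, 0 < m → (m⁻¹) ^ 2 * φ' m⁻¹ = D m)
    (hD : ∀ m : ℝ, 0 < m → HasDerivAt D (d2Ftaud τ m) m)
    (hDneg : ∀ m : ℝ, 0 < m → d2Ftaud τ m ≤ 0)
    (mu : Fin n → ℝ) (hmu : mu ∈ PosCone n) :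
    (∀ i, pdF (Ftaud τ) i mu =
      ((mu i)⁻¹) ^ 2 * pdF (Ftau τ) i fun j => (mu j)⁻¹) ∧
    (∀ i, 0 < pdF (Ftaud τ) i mu) ∧
    (∀ i j, pdF2 (Ftaud τ) i j mu = if i = j then d2Ftaud τ (mu i) else 0) ∧
    (∀ ξ : Fin n → ℝ, ∑ i, ∑ j, pdF2 (Ftaud τ) i j mu * ξ i * ξ j ≤ 0) := by
  have hopen := posCone_isOpen n
  have hψ : ∀ m : ℝ, 0 < m →
      HasDerivAt (fun m : ℝ => -φ m⁻¹) ((m⁻¹) ^ 2 * φ' m⁻¹) m := by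
    intro m hm
    have h1 : HasDerivAt (fun m : ℝ => m⁻¹) (-(m ^ 2)⁻¹) m := hasDerivAt_inv hm.ne'
    have h2 := ((hφ m⁻¹ (inv_pos.2 hm)).comp m h1).neg
    convert h2 using 1
    rfl
    rfl
    rfl
    ring
  have hFd : ∀ y ∈ PosCone n, Ftaud τ y = ∑ j, -φ (y j)⁻¹ := by
    intro y hy
    rw [Ftaud, hFtau _ (fun i => inv_pos.2 (hy i))]
    simp
  have key1 : ∀ y ∈ PosCone n, ∀ i,
      pdF (Ftaud τ) i y = ((y i)⁻¹) ^ 2 * φ' (y i)⁻¹ := by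
    intro y hy i
    exact pdF_of_sum _ _ (fun m => (m⁻¹) ^ 2 * φ' m⁻¹) y
      (eventually_of_mem (hopen.mem_nhds hy) hFd)
      (fun j => hψ (y j) (hy j)) i
  have key2 : ∀ y ∈ PosCone n, ∀ i, pdF (Ftau τ) i y = φ' (y i) := by
    intro y hy i
    exact pdF_of_sum _ _ φ' y
      (eventually_of_mem (hopen.mem_nhds hy) hFtau)
      (fun j => hφ (y j) (hy j)) i
  have hinv : (fun j => (mu j)⁻¹) ∈ PosCone n := fun i => inv_pos.2 (hmu i)
  have s3 : ∀ i j, pdF2 (Ftaud τ) i j mu = if i = j then d2Ftaud τ (mu i) else 0 := by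
    intro i j
    have hpdj : ∀ y ∈ PosCone n, pdF (Ftaud τ) j y = D (y j) := fun y hy =>
      (key1 y hy j).trans (hdual (y j) (hy j))
    have : pdF2 (Ftaud τ) i j mu = pdF (pdF (Ftaud τ) j) i mu := rfl
    rw [this, pdF_of_proj _ D (d2Ftaud τ) mu j
      (eventually_of_mem (hopen.mem_nhds hmu) hpdj) (hD (mu j) (hmu j)) i]
    rcases eq_or_ne i j with h | h
    · simp [h]
    · simp [h]
  refine ⟨fun i => by rw [key1 mu hmu i, key2 _ hinv i], fun i => ?_, s3, fun ξ => ?_⟩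
  · rw [key1 mu hmu i]
    exact mul_pos (pow_pos (inv_pos.2 (hmu i)) 2) (hφpos _ (inv_pos.2 (hmu i)))
  · have : ∀ i : Fin n, ∑ j, pdF2 (Ftaud τ) i j mu * ξ i * ξ j
        = d2Ftaud τ (mu i) * ξ i ^ 2 := by
      intro i
      rw [Finset.sum_eq_single i]
      · rw [s3 i i]; simp [sq]; ring
      · intro j _ hj; rw [s3 i j, if_neg fun h => hj h.symm]; ring
      · simp
    rw [Finset.sum_congr rfl fun i _ => this i]
    refine Finset.sum_nonpos fun i _ => ?_
    exact mul_nonpos_of_nonpos_of_nonneg (hDneg _ (hmu i)) (sq_nonneg _)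

lemma case4_deriv (m : ℝ) :
    HasDerivAt (fun m : ℝ => 1 / (1 + m ^ 2)) (-2 * m / (1 + m ^ 2) ^ 2) m := by
  have h0 : (0:ℝ) < 1 + m ^ 2 := by positivity
  have h : HasDerivAt (fun m : ℝ => 1 + m ^ 2) (2 * m) m := by
    simpa using (hasDerivAt_pow 2 m).const_add 1
  have := h.inv h0.ne'
  convert this using 1
  · rfl
  · rfl
  · funext x; simp
  · ring

lemma case2_phi (c l : ℝ) (hl : 0 < l) :
    HasDerivAt (fun l : ℝ => -c * (1 + l)⁻¹) (c / (1 + l) ^ 2) l := by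
  have h0 : (0:ℝ) < 1 + l := by linarith
  have h : HasDerivAt (fun l : ℝ => 1 + l) 1 l := (hasDerivAt_id l).const_add 1
  have := (h.inv h0.ne').const_mul (-c)
  convert this using 1
  rfl
  rfl
  rfl
  ring

lemma case2_D (c m : ℝ) (hm : 0 < m) :
    HasDerivAt (fun m : ℝ => c / (1 + m) ^ 2) (-2 * c / (1 + m) ^ 3) m := by
  have h0 : (0:ℝ) < 1 + m := by linarith
  have h : HasDerivAt (fun m : ℝ => (1 + m) ^ 2) (2 * (1 + m)) m := by
    simpa using! (((hasDerivAt_id m).const_add 1).pow 2)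
  have h2 := (h.inv (by positivity : ((1+m)^2 : ℝ) ≠ 0)).const_mul c
  have h3 : HasDerivAt (fun m : ℝ => c / (1 + m) ^ 2)
      (c * (-(2 * (1 + m)) / ((1 + m) ^ 2) ^ 2)) m := by
    simpa [div_eq_mul_inv] using h2
  convert h3 using 1
  field_simp

section Case1
variable {a b : ℝ}

lemma c1_facts (ha : 1 < a) (hb0 : 0 ≤ b) (hb2 : b ^ 2 = a ^ 2 - 1) : 0 < b ∧ b < a := by
  constructor
  · rcases hb0.lt_or_eq with h | h
    · exact h
    · exfalso; nlinarith
  · nlinarith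

lemma c1_phi (ha : 1 < a) (hb0 : 0 ≤ b) (hb2 : b ^ 2 = a ^ 2 - 1) (l : ℝ) (hl : 0 < l) :
    HasDerivAt (fun l : ℝ => Real.sqrt (a ^ 2 + 1) / (2 * b) *
        Real.log ((l + a - b) / (l + a + b)))
      (Real.sqrt (a ^ 2 + 1) / ((l + a) ^ 2 - b ^ 2)) l := by
  obtain ⟨hbpos, hba⟩ := c1_facts ha hb0 hb2
  have h1 : (0:ℝ) < l + a - b := by linarith
  have h2 : (0:ℝ) < l + a + b := by linarith
  have hu : HasDerivAt (fun l : ℝ => (l + a - b) / (l + a + b))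
      ((1 * (l + a + b) - (l + a - b) * 1) / (l + a + b) ^ 2) l := by
    exact (((hasDerivAt_id l).add_const a).sub_const b).div
      (((hasDerivAt_id l).add_const a).add_const b) h2.ne'
  have hlog := hu.log (by positivity)
  have := hlog.const_mul (Real.sqrt (a ^ 2 + 1) / (2 * b))
  convert this using 1
  rfl
  rfl
  have h3 : (l + a) ^ 2 - b ^ 2 ≠ 0 := by nlinarith
  field_simp
  ring

lemma c1_dual (ha : 1 < a) (hb0 : 0 ≤ b) (hb2 : b ^ 2 = a ^ 2 - 1) (m : ℝ) (hm : 0 < m) :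
    (m⁻¹) ^ 2 * (Real.sqrt (a ^ 2 + 1) / ((m⁻¹ + a) ^ 2 - b ^ 2)) =
      Real.sqrt (a ^ 2 + 1) / ((1 + a * m) ^ 2 - (b * m) ^ 2) := by
  obtain ⟨hbpos, hba⟩ := c1_facts ha hb0 hb2
  have hmi : (0:ℝ) < m⁻¹ := inv_pos.2 hm
  have h1 : (0:ℝ) < m⁻¹ + a - b := by linarith
  have h2 : (0:ℝ) < m⁻¹ + a + b := by linarith
  have e : (1 + a * m) ^ 2 - (b * m) ^ 2 = m ^ 2 * ((m⁻¹ + a) ^ 2 - b ^ 2) := by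
    field_simp
  rw [e, inv_pow, inv_mul_eq_div, div_div]
  congr 1
  ring

lemma c1_q_pos (ha : 1 < a) (hb0 : 0 ≤ b) (hb2 : b ^ 2 = a ^ 2 - 1) (m : ℝ) (hm : 0 < m) :
    0 < (1 + a * m) ^ 2 - (b * m) ^ 2 := by
  obtain ⟨hbpos, hba⟩ := c1_facts ha hb0 hb2
  have e : (1 + a * m) ^ 2 - (b * m) ^ 2 = (1 + (a - b) * m) * (1 + (a + b) * m) := by ring
  rw [e]
  have f1 : (0:ℝ) < 1 + (a - b) * m := by nlinarith
  have f2 : (0:ℝ) < 1 + (a + b) * m := by nlinarith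
  exact mul_pos f1 f2

lemma c1_D (ha : 1 < a) (hb0 : 0 ≤ b) (hb2 : b ^ 2 = a ^ 2 - 1) (m : ℝ) (hm : 0 < m) :
    HasDerivAt (fun m : ℝ => Real.sqrt (a ^ 2 + 1) / ((1 + a * m) ^ 2 - (b * m) ^ 2))
      (-2 * Real.sqrt (a ^ 2 + 1) * (m + a) /
        ((1 + a * m) ^ 2 - (b * m) ^ 2) ^ 2) m := by
  have hqm := c1_q_pos ha hb0 hb2 m hm
  have hq : HasDerivAt (fun m : ℝ => (1 + a * m) ^ 2 - (b * m) ^ 2) (2 * (m + a)) m := by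
    have h1 : HasDerivAt (fun m : ℝ => (1 + a * m) ^ 2) (2 * (1 + a * m) * a) m := by
      simpa using! (((hasDerivAt_id m).const_mul a).const_add 1).pow 2
    have h2 : HasDerivAt (fun m : ℝ => (b * m) ^ 2) (2 * (b * m) * b) m := by
      simpa using! ((hasDerivAt_id m).const_mul b).pow 2
    have := h1.sub h2
    convert this using 1
    rfl
    rfl
    rfl
    linear_combination 2 * m * hb2
  have h2 := (hq.inv hqm.ne').const_mul (Real.sqrt (a ^ 2 + 1))
  have h3 : HasDerivAt (fun m : ℝ => Real.sqrt (a ^ 2 + 1) / ((1 + a * m) ^ 2 - (b * m) ^ 2))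
      (Real.sqrt (a ^ 2 + 1) * (-(2 * (m + a)) / ((1 + a * m) ^ 2 - (b * m) ^ 2) ^ 2)) m := by
    simpa [div_eq_mul_inv] using h2
  convert h3 using 1
  field_simp

end Case1


section Case3
variable {a b : ℝ}

lemma c3_b_pos (ha0 : 0 < a) (ha1 : a < 1) (hb0 : 0 ≤ b) (hb2 : b ^ 2 = 1 - a ^ 2) :
    0 < b := by
  rcases hb0.lt_or_eq with h | h
  · exact h
  · exfalso; nlinarith

lemma c3_phi (ha0 : 0 < a) (ha1 : a < 1) (hb0 : 0 ≤ b) (hb2 : b ^ 2 = 1 - a ^ 2)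
    (l : ℝ) (hl : 0 < l) :
    HasDerivAt (fun l : ℝ => Real.sqrt (a ^ 2 + 1) / b *
        Real.arctan ((l + a - b) / (l + a + b)))
      (Real.sqrt (a ^ 2 + 1) / ((l + a) ^ 2 + b ^ 2)) l := by
  have hbpos := c3_b_pos ha0 ha1 hb0 hb2
  have h2 : (0:ℝ) < l + a + b := by linarith
  have hu : HasDerivAt (fun l : ℝ => (l + a - b) / (l + a + b))
      ((1 * (l + a + b) - (l + a - b) * 1) / (l + a + b) ^ 2) l :=
    (((hasDerivAt_id l).add_const a).sub_const b).div
      (((hasDerivAt_id l).add_const a).add_const b) h2.ne'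
  have harc := hu.arctan
  have := harc.const_mul (Real.sqrt (a ^ 2 + 1) / b)
  convert this using 1
  rfl
  rfl
  have h3 : (0:ℝ) < (l + a) ^ 2 + b ^ 2 := by positivity
  have h4 : (0:ℝ) < 1 + ((l + a - b) / (l + a + b)) ^ 2 := by positivity
  field_simp
  ring

lemma c3_dual (ha0 : 0 < a) (hb0 : 0 ≤ b) (m : ℝ) (hm : 0 < m) :
    (m⁻¹) ^ 2 * (Real.sqrt (a ^ 2 + 1) / ((m⁻¹ + a) ^ 2 + b ^ 2)) =
      Real.sqrt (a ^ 2 + 1) / ((1 + a * m) ^ 2 + (b * m) ^ 2) := by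
  have hmi : (0:ℝ) < m⁻¹ := inv_pos.2 hm
  have e : (1 + a * m) ^ 2 + (b * m) ^ 2 = m ^ 2 * ((m⁻¹ + a) ^ 2 + b ^ 2) := by
    field_simp
  rw [e, inv_pow, inv_mul_eq_div, div_div]
  congr 1
  ring

lemma c3_q_pos (ha0 : 0 < a) (m : ℝ) (hm : 0 < m) :
    0 < (1 + a * m) ^ 2 + (b * m) ^ 2 := by
  have : (0:ℝ) < 1 + a * m := by nlinarith
  positivity

lemma c3_D (ha0 : 0 < a) (ha1 : a < 1) (hb0 : 0 ≤ b) (hb2 : b ^ 2 = 1 - a ^ 2)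
    (m : ℝ) (hm : 0 < m) :
    HasDerivAt (fun m : ℝ => Real.sqrt (a ^ 2 + 1) / ((1 + a * m) ^ 2 + (b * m) ^ 2))
      (-2 * Real.sqrt (a ^ 2 + 1) * (m + a) /
        ((1 + a * m) ^ 2 + (b * m) ^ 2) ^ 2) m := by
  have hqm := c3_q_pos (b := b) ha0 m hm
  have hq : HasDerivAt (fun m : ℝ => (1 + a * m) ^ 2 + (b * m) ^ 2) (2 * (m + a)) m := by
    have h1 : HasDerivAt (fun m : ℝ => (1 + a * m) ^ 2) (2 * (1 + a * m) * a) m := by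
      simpa using! (((hasDerivAt_id m).const_mul a).const_add 1).pow 2
    have h2 : HasDerivAt (fun m : ℝ => (b * m) ^ 2) (2 * (b * m) * b) m := by
      simpa using! ((hasDerivAt_id m).const_mul b).pow 2
    have := h1.add h2
    convert this using 1
    rfl
    rfl
    rfl
    linear_combination (-2 * m) * hb2
  have h2 := (hq.inv hqm.ne').const_mul (Real.sqrt (a ^ 2 + 1))
  have h3 : HasDerivAt (fun m : ℝ => Real.sqrt (a ^ 2 + 1) / ((1 + a * m) ^ 2 + (b * m) ^ 2))
      (Real.sqrt (a ^ 2 + 1) * (-(2 * (m + a)) / ((1 + a * m) ^ 2 + (b * m) ^ 2) ^ 2)) m := by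
    simpa [div_eq_mul_inv] using h2
  convert h3 using 1
  field_simp

end Case3


lemma one_lt_cot {τ : ℝ} (h0 : 0 < τ) (h : τ < π / 4) : 1 < Real.cot τ := by
  have hπ := Real.pi_pos
  have hs : 0 < Real.sin τ := Real.sin_pos_of_pos_of_lt_pi h0 (by linarith)
  have hlt : Real.sin τ < Real.cos τ := by
    rw [← Real.sin_pi_div_two_sub]
    exact Real.strictMonoOn_sin ⟨by linarith, by linarith⟩ ⟨by linarith, by linarith⟩
      (by linarith)
  rw [Real.cot_eq_cos_div_sin]
  exact (one_lt_div hs).2 hlt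

lemma cot_mem {τ : ℝ} (h0 : π / 4 < τ) (h : τ < π / 2) :
    0 < Real.cot τ ∧ Real.cot τ < 1 := by
  have hπ := Real.pi_pos
  have hs : 0 < Real.sin τ := Real.sin_pos_of_pos_of_lt_pi (by linarith) (by linarith)
  have hc : 0 < Real.cos τ := Real.cos_pos_of_mem_Ioo ⟨by linarith, h⟩
  have hlt : Real.cos τ < Real.sin τ := by
    rw [← Real.sin_pi_div_two_sub]
    exact Real.strictMonoOn_sin ⟨by linarith, by linarith⟩ ⟨by linarith, by linarith⟩
      (by linarith)
  rw [Real.cot_eq_cos_div_sin]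
  exact ⟨div_pos hc hs, (div_lt_one hs).2 hlt⟩

lemma gen_dual (c m : ℝ) (hm : 0 < m) :
    (m⁻¹) ^ 2 * (c / (1 + m⁻¹) ^ 2) = c / (1 + m) ^ 2 := by
  have e : (1 + m) ^ 2 = m ^ 2 * (1 + m⁻¹) ^ 2 := by field_simp; ring
  rw [e, inv_pow, inv_mul_eq_div, div_div]
  congr 1
  ring

lemma c4_dual (m : ℝ) (hm : 0 < m) :
    (m⁻¹) ^ 2 * (1 / (1 + (m⁻¹) ^ 2)) = 1 / (1 + m ^ 2) := by
  have e : 1 + m ^ 2 = m ^ 2 * (1 + (m⁻¹) ^ 2) := by field_simp; ring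
  rw [e, inv_pow, inv_mul_eq_div, div_div]
  congr 1
  ring

/-- For the dual operator `F̃_τ(μ) = -F_τ(1/μ)` one has
`∂F̃_τ/∂μᵢ = λᵢ² ∂F_τ/∂λᵢ > 0` with `λᵢ = 1/μᵢ`, the Hessian of `F̃_τ` is diagonal
with entries `d2Ftaud τ (μᵢ)`, and it is negative semidefinite on `Γ⁺_n`. -/
theorem stmt_5 (n : ℕ) (τ : ℝ) (hτ : τ ∈ Ioc 0 (π / 2))
    (mu : Fin n → ℝ) (hmu : mu ∈ PosCone n) :
    (∀ i, pdF (Ftaud τ) i mu =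
      ((mu i)⁻¹) ^ 2 * pdF (Ftau τ) i fun j => (mu j)⁻¹) ∧
    (∀ i, 0 < pdF (Ftaud τ) i mu) ∧
    (∀ i j, pdF2 (Ftaud τ) i j mu = if i = j then d2Ftaud τ (mu i) else 0) ∧
    (∀ ξ : Fin n → ℝ, ∑ i, ∑ j, pdF2 (Ftaud τ) i j mu * ξ i * ξ j ≤ 0) := by
  obtain ⟨hτ0, hτ2⟩ := hτ
  have hπ := Real.pi_pos
  rcases lt_trichotomy τ (π / 4) with h1 | h1 | h1
  · -- 0 < τ < π/4
    have haA : 1 < Real.cot τ := one_lt_cot hτ0 h1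
    have hb0 : 0 ≤ Real.sqrt |Real.cot τ ^ 2 - 1| := Real.sqrt_nonneg _
    have hb2 : Real.sqrt |Real.cot τ ^ 2 - 1| ^ 2 = Real.cot τ ^ 2 - 1 := by
      rw [Real.sq_sqrt (abs_nonneg _), abs_of_pos (by nlinarith)]
    refine main_of_data τ
      (fun l => Real.sqrt (Real.cot τ ^ 2 + 1) / (2 * Real.sqrt |Real.cot τ ^ 2 - 1|) *
        Real.log ((l + Real.cot τ - Real.sqrt |Real.cot τ ^ 2 - 1|) /
          (l + Real.cot τ + Real.sqrt |Real.cot τ ^ 2 - 1|)))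
      (fun l => Real.sqrt (Real.cot τ ^ 2 + 1) /
        ((l + Real.cot τ) ^ 2 - Real.sqrt |Real.cot τ ^ 2 - 1| ^ 2))
      (fun m => Real.sqrt (Real.cot τ ^ 2 + 1) /
        ((1 + Real.cot τ * m) ^ 2 - (Real.sqrt |Real.cot τ ^ 2 - 1| * m) ^ 2))
      ?_ (fun l hl => c1_phi haA hb0 hb2 l hl) ?_
      (fun m hm => c1_dual haA hb0 hb2 m hm) ?_ ?_ mu hmu
    · intro y hy
      rw [Ftau, if_pos h1, Finset.mul_sum]
    · intro l hl
      apply div_pos (Real.sqrt_pos.2 (by positivity))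
      rw [hb2]; nlinarith
    · intro m hm
      have := c1_D haA hb0 hb2 m hm
      rw [show d2Ftaud τ m = -2 * Real.sqrt (Real.cot τ ^ 2 + 1) * (m + Real.cot τ) /
          ((1 + Real.cot τ * m) ^ 2 - (Real.sqrt |Real.cot τ ^ 2 - 1| * m) ^ 2) ^ 2 from
        by rw [d2Ftaud, if_pos h1]]
      exact this
    · intro m hm
      rw [d2Ftaud, if_pos h1]
      apply div_nonpos_of_nonpos_of_nonneg _ (sq_nonneg _)
      have hs : 0 ≤ Real.sqrt (Real.cot τ ^ 2 + 1) := Real.sqrt_nonneg _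
      nlinarith
  · -- τ = π/4
    subst h1
    have h4 : ¬ (π / 4 < π / 4) := lt_irrefl _
    refine main_of_data (π / 4)
      (fun l => -Real.sqrt 2 * (1 + l)⁻¹)
      (fun l => Real.sqrt 2 / (1 + l) ^ 2)
      (fun m => Real.sqrt 2 / (1 + m) ^ 2)
      ?_ (fun l hl => case2_phi (Real.sqrt 2) l hl) ?_
      ?_ ?_ ?_ mu hmu
    · intro y hy
      rw [Ftau, if_neg h4, if_pos rfl, Finset.mul_sum]
    · intro l hl
      apply div_pos (Real.sqrt_pos.2 two_pos)
      positivity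
    · intro m hm
      exact gen_dual (Real.sqrt 2) m hm
    · intro m hm
      have := case2_D (Real.sqrt 2) m hm
      rw [show d2Ftaud (π / 4) m = -2 * Real.sqrt 2 / (1 + m) ^ 3 from
        by rw [d2Ftaud, if_neg h4, if_pos rfl]]
      exact this
    · intro m hm
      rw [d2Ftaud, if_neg h4, if_pos rfl]
      apply div_nonpos_of_nonpos_of_nonneg
      · have : (0:ℝ) ≤ Real.sqrt 2 := Real.sqrt_nonneg _
        linarith
      · positivity
  · -- π/4 < τ ≤ π/2
    have hne : τ ≠ π / 4 := ne_of_gt h1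
    have hnl : ¬ (τ < π / 4) := not_lt.2 h1.le
    rcases hτ2.lt_or_eq with h2 | h2
    · -- π/4 < τ < π/2
      obtain ⟨ha0, ha1⟩ := cot_mem h1 h2
      have hb0 : 0 ≤ Real.sqrt |Real.cot τ ^ 2 - 1| := Real.sqrt_nonneg _
      have hb2 : Real.sqrt |Real.cot τ ^ 2 - 1| ^ 2 = 1 - Real.cot τ ^ 2 := by
        rw [Real.sq_sqrt (abs_nonneg _), abs_of_neg (by nlinarith), neg_sub]
      refine main_of_data τ
        (fun l => Real.sqrt (Real.cot τ ^ 2 + 1) / Real.sqrt |Real.cot τ ^ 2 - 1| *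
          Real.arctan ((l + Real.cot τ - Real.sqrt |Real.cot τ ^ 2 - 1|) /
            (l + Real.cot τ + Real.sqrt |Real.cot τ ^ 2 - 1|)))
        (fun l => Real.sqrt (Real.cot τ ^ 2 + 1) /
          ((l + Real.cot τ) ^ 2 + Real.sqrt |Real.cot τ ^ 2 - 1| ^ 2))
        (fun m => Real.sqrt (Real.cot τ ^ 2 + 1) /
          ((1 + Real.cot τ * m) ^ 2 + (Real.sqrt |Real.cot τ ^ 2 - 1| * m) ^ 2))
        ?_ (fun l hl => c3_phi ha0 ha1 hb0 hb2 l hl) ?_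
        (fun m hm => c3_dual ha0 hb0 m hm) ?_ ?_ mu hmu
      · intro y hy
        rw [Ftau, if_neg hnl, if_neg hne, if_pos h2, Finset.mul_sum]
      · intro l hl
        apply div_pos (Real.sqrt_pos.2 (by positivity))
        rw [hb2]; nlinarith
      · intro m hm
        have := c3_D ha0 ha1 hb0 hb2 m hm
        rw [show d2Ftaud τ m = -2 * Real.sqrt (Real.cot τ ^ 2 + 1) * (m + Real.cot τ) /
            ((1 + Real.cot τ * m) ^ 2 + (Real.sqrt |Real.cot τ ^ 2 - 1| * m) ^ 2) ^ 2 from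
          by rw [d2Ftaud, if_neg hnl, if_neg hne, if_pos h2]]
        exact this
      · intro m hm
        rw [d2Ftaud, if_neg hnl, if_neg hne, if_pos h2]
        apply div_nonpos_of_nonpos_of_nonneg _ (sq_nonneg _)
        have hs : 0 ≤ Real.sqrt (Real.cot τ ^ 2 + 1) := Real.sqrt_nonneg _
        nlinarith
    · -- τ = π/2
      subst h2
      have hn2 : ¬ (π / 2 < π / 2) := lt_irrefl _
      refine main_of_data (π / 2)
        (fun l => Real.arctan l)
        (fun l => 1 / (1 + l ^ 2))
        (fun m => 1 / (1 + m ^ 2))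
        ?_ (fun l _ => Real.hasDerivAt_arctan l) ?_
        (fun m hm => c4_dual m hm) ?_ ?_ mu hmu
      · intro y hy
        rw [Ftau, if_neg hnl, if_neg hne, if_neg hn2]
      · intro l hl
        positivity
      · intro m hm
        have := case4_deriv m
        rw [show d2Ftaud (π / 2) m = -2 * m / (1 + m ^ 2) ^ 2 from
          by rw [d2Ftaud, if_neg hnl, if_neg hne, if_neg hn2]]
        exact this
      · intro m hm
        rw [d2Ftaud, if_neg hnl, if_neg hne, if_neg hn2]
        apply div_nonpos_of_nonpos_of_nonneg _ (sq_nonneg _)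
        linarith


end SBV
end
end
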